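/- Let G be a finite group and M a G-lattice. The inclusion M^G ⊆ M induces by restriction an injective homomorphism (Hom_ℤ(M,ℤ))^G → Hom_ℤ(M^G,ℤ), and the cokernel of this homomorphism is finite. -/

import Mathlib

lemma auxFG {M : Type*} [AddCommGroup M] [Module.Free ℤ M] [Module.Finite ℤ M]
    (MG : AddSubgroup M) : AddGroup.FG (MG →+ ℤ) := by
  haveI : IsNoetherian ℤ M := inferInstance
  haveI : Module.Finite ℤ (AddSubgroup.toIntSubmodule MG) :=
    Module.Finite.iff_fg.mpr (IsNoetherian.noetherian _)
  haveI h2 : AddGroup.FG ↥MG := Module.Finite.iff_addGroup_fg.mp this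
  haveI : Module.Finite ℤ ↥MG := Module.Finite.iff_addGroup_fg.mpr h2
  haveI : NoZeroSMulDivisors ℤ ↥MG := by
    constructor
    intro c x h
    have h' : c • (x : M) = 0 := by
      have := congrArg (Subtype.val) h
      simpa using this
    rcases smul_eq_zero.mp h' with h | h
    · exact Or.inl h
    · exact Or.inr (by ext; simpa using h)
  haveI : Module.Free ℤ ↥MG := inferInstance
  exact Module.Finite.iff_addGroup_fg.mp inferInstance

/-- For a `G`-lattice `M`, restriction to `M^G` gives an injective map
`(Hom_ℤ(M,ℤ))^G → Hom_ℤ(M^G, ℤ)` with finite cokernel. -/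
theorem stmt1 {G M : Type*} [Group G] [Finite G]
    [AddCommGroup M] [Module ℤ M] [Module.Free ℤ M] [Module.Finite ℤ M]
    [DistribMulAction G M]
    (MG : AddSubgroup M) (hMG : ∀ m : M, m ∈ MG ↔ ∀ g : G, g • m = m)
    (S : AddSubgroup (M →+ ℤ))
    (hS : ∀ φ : M →+ ℤ, φ ∈ S ↔ ∀ (g : G) (m : M), φ (g • m) = φ m)
    (res : S →+ (MG →+ ℤ))
    (hres : ∀ (φ : S) (m : MG), res φ m = (φ : M →+ ℤ) (m : M)) :
    Function.Injective res ∧ Finite ((MG →+ ℤ) ⧸ res.range) := by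
  haveI := Fintype.ofFinite G
  set n : ℕ := Fintype.card G with hn_def
  have hn : 0 < n := Fintype.card_pos
  -- the "norm" element lies in MG
  have hnorm : ∀ m : M, (∑ g : G, g • m) ∈ MG := by
    intro m
    rw [hMG]
    intro g
    rw [Finset.smul_sum]
    simp_rw [smul_smul]
    exact Fintype.sum_bijective (g * ·) (Group.mulLeft_bijective g)
      (fun h => (g * h) • m) (fun h => h • m) (fun _ => rfl)
  -- evaluating an invariant φ on the norm of m gives n * φ m
  have hval : ∀ (φ : S) (m : M),
      (φ : M →+ ℤ) (∑ g : G, g • m) = n * (φ : M →+ ℤ) m := by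
    intro φ m
    rw [map_sum]
    have hφ := (hS (φ : M →+ ℤ)).mp φ.2
    calc ∑ g : G, (φ : M →+ ℤ) (g • m) = ∑ _g : G, (φ : M →+ ℤ) m := by
          exact Finset.sum_congr rfl fun g _ => hφ g m
      _ = n * (φ : M →+ ℤ) m := by
          rw [Finset.sum_const, Finset.card_univ, nsmul_eq_mul]
  have hinj : Function.Injective res := by
    rw [injective_iff_map_eq_zero]
    intro φ hφ
    ext m
    have h1 : (φ : M →+ ℤ) (∑ g : G, g • m) = 0 := by
      have := hres φ ⟨∑ g : G, g • m, hnorm m⟩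
      rw [hφ] at this
      simpa using this.symm
    rw [hval φ m] at h1
    have : (φ : M →+ ℤ) m = 0 := by
      rcases mul_eq_zero.mp h1 with h | h
      · exact absurd h (by exact_mod_cast hn.ne')
      · exact h
    simpa using this
  refine ⟨hinj, ?_⟩
  -- key: n • ψ lies in the range of res for all ψ
  have hkey : ∀ ψ : MG →+ ℤ, (n : ℤ) • ψ ∈ res.range := by
    intro ψ
    -- construct the invariant functional m ↦ ψ(∑ g • m)
    let φ0 : M →+ ℤ := AddMonoidHom.mk' (fun m => ψ ⟨∑ g : G, g • m, hnorm m⟩) (by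
      intro a b
      have : (⟨∑ g : G, g • (a + b), hnorm (a + b)⟩ : MG)
          = ⟨∑ g : G, g • a, hnorm a⟩ + ⟨∑ g : G, g • b, hnorm b⟩ := by
        ext
        simp [smul_add, Finset.sum_add_distrib]
      show ψ ⟨∑ g : G, g • (a + b), hnorm (a + b)⟩
        = ψ ⟨∑ g : G, g • a, hnorm a⟩ + ψ ⟨∑ g : G, g • b, hnorm b⟩
      rw [this, map_add])
    have hφ0 : φ0 ∈ S := by
      rw [hS]
      intro g m
      have : (⟨∑ g' : G, g' • (g • m), hnorm (g • m)⟩ : MG)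
          = ⟨∑ g' : G, g' • m, hnorm m⟩ := by
        ext
        show ∑ g' : G, g' • g • m = ∑ g' : G, g' • m
        simp_rw [smul_smul]
        exact Fintype.sum_bijective (· * g) (Group.mulRight_bijective g)
          (fun h => (h * g) • m) (fun h => h • m) (fun _ => rfl)
      show ψ _ = ψ _
      rw [this]
    refine ⟨⟨φ0, hφ0⟩, ?_⟩
    ext m
    rw [hres]
    show ψ ⟨∑ g : G, g • (m : M), hnorm m⟩ = ((n : ℤ) • ψ) m
    have hm : (⟨∑ g : G, g • (m : M), hnorm m⟩ : MG) = n • m := by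
      ext
      have : ∀ g : G, g • (m : M) = (m : M) := (hMG m).mp m.2
      simp [this, Finset.sum_const, Finset.card_univ, hn_def]
    rw [hm]
    simp [map_nsmul]
  -- finiteness of the cokernel
  haveI : AddGroup.FG (MG →+ ℤ) := by
    have hMod : (AddCommGroup.toIntModule M) = ‹Module ℤ M› := @Subsingleton.elim _ (@Unique.instSubsingleton _ AddCommGroup.uniqueIntModule) _ _
    haveI f1 : @Module.Free ℤ M _ _ (AddCommGroup.toIntModule M) := by
      rw [hMod]; infer_instance
    haveI f2 : @Module.Finite ℤ M _ _ (AddCommGroup.toIntModule M) := by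
      rw [hMod]; infer_instance
    exact auxFG MG
  haveI : AddGroup.FG ((MG →+ ℤ) ⧸ res.range) :=
    AddGroup.fg_of_surjective (f := QuotientAddGroup.mk' res.range)
      (QuotientAddGroup.mk'_surjective _)
  apply AddCommGroup.finite_of_fg_torsion
  intro x
  obtain ⟨ψ, rfl⟩ := QuotientAddGroup.mk'_surjective res.range x
  rw [isOfFinAddOrder_iff_nsmul_eq_zero]
  refine ⟨n, hn, ?_⟩
  rw [← map_nsmul]
  rw [QuotientAddGroup.mk'_apply, QuotientAddGroup.eq_zero_iff]
  have := hkey ψ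
  simpa using this
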